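/- Let ε > 0 and C ≥ 1. Then the function y : ℝ → ℝ given by y(x) = x² + (ε/2)·ln( √(π/(2ε)) · ( erf(√(2/ε)·x) + C ) ) is well-defined (the argument of the logarithm is strictly positive for all x) and satisfies the differential equation y'(x) = 2x + exp(−2·y(x)/ε) for every x ∈ ℝ. -/

import Mathlib

open Real MeasureTheory

/-- The Gauss error function `erf(u) = (2/√π) ∫₀ᵘ e^{−s²} ds`. -/
noncomputable def erf (u : ℝ) : ℝ :=
  (2 / Real.sqrt π) * ∫ s in (0:ℝ)..u, Real.exp (-s ^ 2)

/-- For `ε > 0` and `C ≥ 1`, the function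
`y(x) = x² + (ε/2)·ln(√(π/(2ε))·(erf(√(2/ε)x) + C))` is well-defined (the argument of
the logarithm is positive) and solves `y'(x) = 2x + exp(−2y(x)/ε)`. -/

lemma gauss_integrable : MeasureTheory.Integrable (fun s : ℝ => Real.exp (-s ^ 2)) := by
  simpa using integrable_exp_neg_mul_sq one_pos

lemma key (v : ℝ) : ∫ s in (0:ℝ)..v, Real.exp (-s ^ 2) < Real.sqrt π / 2 := by
  have hsq : 0 < Real.sqrt π / 2 := by positivity
  rcases le_or_gt v 0 with hv | hv
  · refine lt_of_le_of_lt ?_ hsq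
    rw [← neg_nonneg, ← intervalIntegral.integral_symm]
    exact intervalIntegral.integral_nonneg hv (fun x _ => (Real.exp_pos _).le)
  · have hIoi : ∫ s in Set.Ioi (0:ℝ), Real.exp (-s ^ 2) = Real.sqrt π / 2 := by
      have := integral_gaussian_Ioi 1
      simpa using this
    have hunion : Set.Ioc (0:ℝ) v ∪ Set.Ioi v = Set.Ioi 0 := Set.Ioc_union_Ioi_eq_Ioi hv.le
    have hdisj : Disjoint (Set.Ioc (0:ℝ) v) (Set.Ioi v) := Set.Ioc_disjoint_Ioi le_rfl
    have hsum : (∫ s in Set.Ioc (0:ℝ) v, Real.exp (-s ^ 2))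
        + ∫ s in Set.Ioi v, Real.exp (-s ^ 2) = Real.sqrt π / 2 := by
      rw [← hIoi, ← hunion,
        MeasureTheory.setIntegral_union hdisj measurableSet_Ioi
          gauss_integrable.integrableOn gauss_integrable.integrableOn]
    have hpos : 0 < ∫ s in Set.Ioi v, Real.exp (-s ^ 2) := by
      refine (MeasureTheory.setIntegral_pos_iff_support_of_nonneg_ae
        (Filter.Eventually.of_forall fun x => (Real.exp_pos _).le)
        gauss_integrable.integrableOn).2 ?_
      have : Function.support (fun s : ℝ => Real.exp (-s ^ 2)) = Set.univ := by
        ext x; simp [Function.support, (Real.exp_pos _).ne']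
      rw [this, Set.univ_inter]
      simp
    rw [intervalIntegral.integral_of_le hv.le]
    linarith

lemma neg_one_lt_erf (u : ℝ) : -1 < erf u := by
  have hπ : 0 < Real.sqrt π := Real.sqrt_pos.2 Real.pi_pos
  have hflip : ∫ s in (0:ℝ)..u, Real.exp (-s ^ 2)
      = - ∫ s in (0:ℝ)..(-u), Real.exp (-s ^ 2) := by
    have h2 := intervalIntegral.integral_comp_neg (a := (0:ℝ)) (b := -u)
      (fun s => Real.exp (-s ^ 2))
    simp only [neg_neg, neg_zero] at h2
    simp only [neg_sq] at h2
    rw [h2, intervalIntegral.integral_symm]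
  have h := key (-u)
  have : -(Real.sqrt π / 2) < ∫ s in (0:ℝ)..u, Real.exp (-s ^ 2) := by
    rw [hflip]; linarith
  unfold erf
  rw [show (-1 : ℝ) = (2 / Real.sqrt π) * (-(Real.sqrt π / 2)) by field_simp]
  exact (mul_lt_mul_iff_right₀ (by positivity)).2 this

lemma hasDerivAt_erf (u : ℝ) : HasDerivAt erf (2 / Real.sqrt π * Real.exp (-u ^ 2)) u := by
  have h : HasDerivAt (fun u : ℝ => ∫ s in (0:ℝ)..u, Real.exp (-s ^ 2))
      (Real.exp (-u ^ 2)) u := by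
    refine intervalIntegral.integral_hasDerivAt_right
      gauss_integrable.intervalIntegrable ?_ (by fun_prop)
    exact (Continuous.stronglyMeasurable (by fun_prop)).stronglyMeasurableAtFilter
  exact h.const_mul _

theorem stmt3 (ε C : ℝ) (hε : 0 < ε) (hC : 1 ≤ C) :
    (∀ x : ℝ, 0 < Real.sqrt (π / (2 * ε)) * (erf (Real.sqrt (2 / ε) * x) + C)) ∧
    (∀ x : ℝ,
      HasDerivAt
        (fun x : ℝ => x ^ 2 +
          ε / 2 * Real.log (Real.sqrt (π / (2 * ε)) * (erf (Real.sqrt (2 / ε) * x) + C)))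
        (2 * x + Real.exp (-(2 * (x ^ 2 +
          ε / 2 * Real.log (Real.sqrt (π / (2 * ε)) * (erf (Real.sqrt (2 / ε) * x) + C)))) / ε))
        x) := by
  set c := Real.sqrt (2 / ε) with hc
  set A := Real.sqrt (π / (2 * ε)) with hA
  have hApos : 0 < A := Real.sqrt_pos.2 (by positivity)
  have hgpos : ∀ x : ℝ, 0 < A * (erf (c * x) + C) := fun x => by
    have := neg_one_lt_erf (c * x)
    have : 0 < erf (c * x) + C := by linarith
    positivity
  refine ⟨hgpos, fun x => ?_⟩
  have hc2 : c ^ 2 = 2 / ε := Real.sq_sqrt (by positivity)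
  have hAc : A * c = Real.sqrt π / ε := by
    rw [hA, hc, ← Real.sqrt_mul (by positivity), show π / (2 * ε) * (2 / ε) = π / ε ^ 2 by
      field_simp, Real.sqrt_div Real.pi_pos.le, Real.sqrt_sq hε.le]
  have hπ : 0 < Real.sqrt π := Real.sqrt_pos.2 Real.pi_pos
  -- derivative of inner function
  have h1 : HasDerivAt (fun x : ℝ => erf (c * x))
      (2 / Real.sqrt π * Real.exp (-(c * x) ^ 2) * c) x := by
    have := (hasDerivAt_erf (c * x)).comp x ((hasDerivAt_id x).const_mul c)
    simpa [Function.comp_def] using this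
  have h2 : HasDerivAt (fun x : ℝ => A * (erf (c * x) + C))
      (A * (2 / Real.sqrt π * Real.exp (-(c * x) ^ 2) * c)) x :=
    (h1.add_const C).const_mul A
  have h3 : HasDerivAt (fun x : ℝ => x ^ 2 + ε / 2 * Real.log (A * (erf (c * x) + C)))
      (2 * x + ε / 2 * (A * (2 / Real.sqrt π * Real.exp (-(c * x) ^ 2) * c)
        / (A * (erf (c * x) + C)))) x := by
    have hp := (h2.log (hgpos x).ne').const_mul (ε / 2)
    have hx : HasDerivAt (fun x : ℝ => x ^ 2) (2 * x) x := by
      simpa using hasDerivAt_pow 2 x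
    exact hx.add hp
  convert h3 using 1
  congr 1
  -- value equality
  have hgx := hgpos x
  have hcx : -(c * x) ^ 2 = -(2 / ε) * x ^ 2 := by rw [mul_pow, hc2]; ring
  rw [hcx]
  rw [show -(2 * (x ^ 2 + ε / 2 * Real.log (A * (erf (c * x) + C)))) / ε
      = -(2 / ε) * x ^ 2 + -(Real.log (A * (erf (c * x) + C))) by field_simp; ring,
    Real.exp_add, Real.exp_neg, Real.exp_log hgx]
  rw [show A * (2 / Real.sqrt π * Real.exp (-(2 / ε) * x ^ 2) * c)
      = (A * c) * (2 / Real.sqrt π) * Real.exp (-(2 / ε) * x ^ 2) by ring, hAc]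
  field_simp
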